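/- Fix u ∈ ℝ⁴ and let G : ℝ⁴ → ℝ, G(α) = ∫_{-1}^{1} Real.exp (α 0 + α 1 * x + α 2 * x² * 1_{[0,1]}(x) + α 3 * x² * 1_{[-1,0]}(x)) dx - (u 0 * α 0 + u 1 * α 1 + u 2 * α 2 + u 3 * α 3). If α* ∈ ℝ⁴ is a local minimizer of G, then the entropy ansatz ψ(x) = Real.exp (α* 0 + α* 1 * x + α* 2 * x² * 1_{[0,1]}(x) + α* 3 * x² * 1_{[-1,0]}(x)) satisfies the moment constraints: ∫_{-1}^{1} ψ(x) dx = u 0, ∫_{-1}^{1} x * ψ(x) dx = u 1, ∫_{0}^{1} x² * ψ(x) dx = u 2, and ∫_{-1}^{0} x² * ψ(x) dx = u 3. -/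

import Mathlib

open Set MeasureTheory intervalIntegral
open scoped Interval

/-- Key differentiation-under-integral lemma. -/
lemma key_deriv (f b : ℝ → ℝ) (hf : Measurable f) (hb : Measurable b)
    (C : ℝ) (hfC : ∀ x ∈ Ι (-1:ℝ) 1, |f x| ≤ C) (hbC : ∀ x ∈ Ι (-1:ℝ) 1, |b x| ≤ 1) (t₀ : ℝ) :
    HasDerivAt (fun t => ∫ x in (-1:ℝ)..1, Real.exp (f x + t * b x))
      (∫ x in (-1:ℝ)..1, b x * Real.exp (f x + t₀ * b x)) t₀ := by
  have hmeas : ∀ t : ℝ, AEStronglyMeasurable (fun x => Real.exp (f x + t * b x))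
      (MeasureTheory.volume.restrict (Ι (-1:ℝ) 1)) := fun t =>
    ((hf.add (hb.const_mul t)).exp).aestronglyMeasurable
  have hbound : ∀ t x, x ∈ Ι (-1:ℝ) 1 → |t - t₀| ≤ 1 →
      Real.exp (f x + t * b x) ≤ Real.exp (C + |t₀| + 1) := by
    intro t x hx ht
    apply Real.exp_le_exp.2
    have h1 : f x + t * b x ≤ |f x| + |t * b x| := by
      calc f x + t * b x ≤ |f x + t * b x| := le_abs_self _
        _ ≤ |f x| + |t * b x| := abs_add_le _ _
    have h2 : |t * b x| ≤ |t| := by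
      rw [abs_mul]
      calc |t| * |b x| ≤ |t| * 1 := mul_le_mul_of_nonneg_left (hbC x hx) (abs_nonneg t)
        _ = |t| := mul_one _
    have h3 : |t| ≤ |t₀| + 1 := by
      calc |t| = |t₀ + (t - t₀)| := by ring_nf
        _ ≤ |t₀| + |t - t₀| := abs_add_le _ _
        _ ≤ |t₀| + 1 := by linarith
    linarith [hfC x hx]
  have hmem : ∀ᵐ x ∂(MeasureTheory.volume.restrict (Ι (-1:ℝ) 1)), x ∈ Ι (-1:ℝ) 1 :=
    ae_restrict_mem measurableSet_uIoc
  have hconst : IntervalIntegrable (fun _ : ℝ => Real.exp (C + |t₀| + 1))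
      MeasureTheory.volume (-1:ℝ) 1 := intervalIntegrable_const
  have h := hasDerivAt_integral_of_dominated_loc_of_deriv_le
    (F := fun t x => Real.exp (f x + t * b x))
    (F' := fun t x => b x * Real.exp (f x + t * b x)) (x₀ := t₀)
    (a := (-1:ℝ)) (b := (1:ℝ)) (bound := fun _ => Real.exp (C + |t₀| + 1))
    (s := Metric.ball t₀ 1) (Metric.ball_mem_nhds t₀ one_pos)
    (Filter.Eventually.of_forall fun t => hmeas t)
    (by
      rw [intervalIntegrable_iff]
      have hfin : MeasureTheory.volume (Ι (-1:ℝ) 1) < ⊤ := measure_Ioc_lt_top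
      refine Integrable.mono' (g := fun _ => Real.exp (C + |t₀| + 1))
        (integrableOn_const hfin.ne) (hmeas t₀) ?_
      filter_upwards [hmem] with x hx
      rw [Real.norm_eq_abs, abs_of_pos (Real.exp_pos _)]
      exact hbound t₀ x hx (by simp))
    (((hb.mul ((hf.add (hb.const_mul t₀)).exp))).aestronglyMeasurable)
    (Filter.Eventually.of_forall fun x hx t ht => by
      rw [Real.norm_eq_abs, abs_mul, abs_of_pos (Real.exp_pos _)]
      calc |b x| * Real.exp (f x + t * b x) ≤ 1 * Real.exp (C + |t₀| + 1) := by
            apply mul_le_mul (hbC x hx)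
              (hbound t x hx (le_of_lt (by simpa [Real.dist_eq] using ht)))
              (le_of_lt (Real.exp_pos _)) one_pos.le
        _ = Real.exp (C + |t₀| + 1) := one_mul _)
    hconst
    (Filter.Eventually.of_forall fun x _ t _ => by
      have : HasDerivAt (fun t : ℝ => f x + t * b x) (b x) t := by
        simpa using ((hasDerivAt_mul_const (b x)).const_add (f x))
      simpa [mul_comm] using this.exp)
  exact h.2

theorem dmm2_dual_first_order_conditions (u : Fin 4 → ℝ) (α : Fin 4 → ℝ)
    (hmin : IsLocalMin
      (fun β : Fin 4 → ℝ =>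
        (∫ x in (-1 : ℝ)..1,
            Real.exp (β 0 + β 1 * x + β 2 * (x ^ 2 * (Icc (0 : ℝ) 1).indicator 1 x)
              + β 3 * (x ^ 2 * (Icc (-1 : ℝ) 0).indicator 1 x)))
          - (u 0 * β 0 + u 1 * β 1 + u 2 * β 2 + u 3 * β 3)) α) :
    (∫ x in (-1 : ℝ)..1,
        Real.exp (α 0 + α 1 * x + α 2 * (x ^ 2 * (Icc (0 : ℝ) 1).indicator 1 x)
          + α 3 * (x ^ 2 * (Icc (-1 : ℝ) 0).indicator 1 x))) = u 0 ∧
    (∫ x in (-1 : ℝ)..1,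
        x * Real.exp (α 0 + α 1 * x + α 2 * (x ^ 2 * (Icc (0 : ℝ) 1).indicator 1 x)
          + α 3 * (x ^ 2 * (Icc (-1 : ℝ) 0).indicator 1 x))) = u 1 ∧
    (∫ x in (0 : ℝ)..1,
        x ^ 2 * Real.exp (α 0 + α 1 * x + α 2 * (x ^ 2 * (Icc (0 : ℝ) 1).indicator 1 x)
          + α 3 * (x ^ 2 * (Icc (-1 : ℝ) 0).indicator 1 x))) = u 2 ∧
    (∫ x in (-1 : ℝ)..0,
        x ^ 2 * Real.exp (α 0 + α 1 * x + α 2 * (x ^ 2 * (Icc (0 : ℝ) 1).indicator 1 x)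
          + α 3 * (x ^ 2 * (Icc (-1 : ℝ) 0).indicator 1 x))) = u 3 := by
  set E : (Fin 4 → ℝ) → ℝ → ℝ := fun β x =>
    β 0 + β 1 * x + β 2 * (x ^ 2 * (Icc (0 : ℝ) 1).indicator 1 x)
      + β 3 * (x ^ 2 * (Icc (-1 : ℝ) 0).indicator 1 x) with hE
  set L : (Fin 4 → ℝ) → ℝ := fun β => u 0 * β 0 + u 1 * β 1 + u 2 * β 2 + u 3 * β 3 with hL
  -- measurability of basic pieces
  have hind1 : Measurable ((Icc (0 : ℝ) 1).indicator (1 : ℝ → ℝ)) :=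
    measurable_const.indicator measurableSet_Icc
  have hind2 : Measurable ((Icc (-1 : ℝ) 0).indicator (1 : ℝ → ℝ)) :=
    measurable_const.indicator measurableSet_Icc
  have hEmeas : Measurable (E α) := by
    apply Measurable.add
    apply Measurable.add
    apply Measurable.add
    · exact measurable_const
    · exact measurable_id.const_mul _
    · exact ((measurable_id.pow_const 2).mul hind1).const_mul _
    · exact ((measurable_id.pow_const 2).mul hind2).const_mul _
  -- indicator values
  have hindval : ∀ (s : Set ℝ) (x : ℝ), s.indicator (1 : ℝ → ℝ) x = 0 ∨
      s.indicator (1 : ℝ → ℝ) x = 1 := by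
    intro s x
    by_cases h : x ∈ s <;> simp [h]
  have hindterm : ∀ (s : Set ℝ) (x : ℝ), |x| ≤ 1 → |x ^ 2 * s.indicator (1 : ℝ → ℝ) x| ≤ 1 := by
    intro s x hx
    rcases hindval s x with h | h <;> rw [h]
    · simp
    · rw [mul_one, abs_pow]
      calc |x| ^ 2 ≤ 1 ^ 2 := pow_le_pow_left₀ (abs_nonneg x) hx 2
        _ = 1 := one_pow 2
  have habs : ∀ x ∈ Ι (-1:ℝ) 1, |x| ≤ 1 := by
    intro x hx
    rw [Set.uIoc_of_le (by norm_num : (-1:ℝ) ≤ 1)] at hx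
    exact abs_le.2 ⟨hx.1.le, hx.2⟩
  -- the generic first-order condition in direction b for coordinate i
  have hG : ∀ (i : Fin 4) (b : ℝ → ℝ), Measurable b → (∀ x ∈ Ι (-1:ℝ) 1, |b x| ≤ 1) →
      (∀ t x, E (Function.update α i t) x = (E α x - α i * b x) + t * b x) →
      (∀ t, L (Function.update α i t) = (L α - u i * α i) + u i * t) →
      (∫ x in (-1:ℝ)..1, b x * Real.exp (E α x)) = u i := by
    intro i b hbm hb1 hexp hlin
    set f : ℝ → ℝ := fun x => E α x - α i * b x with hf
    have hfm : Measurable f := hEmeas.sub (hbm.const_mul _)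
    set C : ℝ := |α 0| + |α 1| + |α 2| + |α 3| + |α i| with hC
    have hfC : ∀ x ∈ Ι (-1:ℝ) 1, |f x| ≤ C := by
      intro x hx
      have hx1 := habs x hx
      have h1 : |α 1 * x| ≤ |α 1| := by
        rw [abs_mul]; nlinarith [abs_nonneg (α 1)]
      have h2 : |α 2 * (x ^ 2 * (Icc (0 : ℝ) 1).indicator 1 x)| ≤ |α 2| := by
        rw [abs_mul]; nlinarith [abs_nonneg (α 2), hindterm (Icc (0:ℝ) 1) x hx1,
          abs_nonneg (x ^ 2 * (Icc (0 : ℝ) 1).indicator 1 x)]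
      have h3 : |α 3 * (x ^ 2 * (Icc (-1 : ℝ) 0).indicator 1 x)| ≤ |α 3| := by
        rw [abs_mul]; nlinarith [abs_nonneg (α 3), hindterm (Icc (-1:ℝ) 0) x hx1,
          abs_nonneg (x ^ 2 * (Icc (-1 : ℝ) 0).indicator 1 x)]
      have h4 : |α i * b x| ≤ |α i| := by
        rw [abs_mul]; nlinarith [abs_nonneg (α i), hb1 x hx, abs_nonneg (b x)]
      have e0 := abs_le.1 (le_refl |α 0|)
      have e1 := abs_le.1 h1
      have e2 := abs_le.1 h2
      have e3 := abs_le.1 h3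
      have e4 := abs_le.1 h4
      rw [hf, hE, hC]
      simp only
      rw [abs_le]
      constructor <;> [(linarith [neg_abs_le (α 0), le_abs_self (α 0)]);
        (linarith [neg_abs_le (α 0), le_abs_self (α 0)])]
    have hder := key_deriv f b hfm hbm C hfC hb1 (α i)
    -- rewrite the derivative value
    have hval : (∫ x in (-1:ℝ)..1, b x * Real.exp (f x + α i * b x))
        = ∫ x in (-1:ℝ)..1, b x * Real.exp (E α x) := by
      apply intervalIntegral.integral_congr
      intro x _
      congr 1
      rw [hf]; ring_nf
    -- local min of the composed function
    have hcontu : Continuous (fun t : ℝ => Function.update α i t) := by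
      apply continuous_pi
      intro j
      simp only [Function.update_apply]
      split_ifs <;> [exact continuous_id; exact continuous_const]
    have hcomp : IsLocalMin (fun t : ℝ =>
        (∫ x in (-1:ℝ)..1, Real.exp (E (Function.update α i t) x)) - L (Function.update α i t))
        (α i) := by
      have hmin' : IsLocalMin (fun β : Fin 4 → ℝ =>
          (∫ x in (-1:ℝ)..1, Real.exp (E β x)) - L β)
          ((fun t : ℝ => Function.update α i t) (α i)) := by
        have hus : (fun t : ℝ => Function.update α i t) (α i) = α :=
          Function.update_eq_self i α
        rw [hus]
        exact hmin
      exact IsLocalMin.comp_continuous hmin' hcontu.continuousAt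
    -- the composed function as a nice function of t
    have hfun : (fun t : ℝ =>
        (∫ x in (-1:ℝ)..1, Real.exp (E (Function.update α i t) x)) - L (Function.update α i t))
        = fun t : ℝ => (∫ x in (-1:ℝ)..1, Real.exp (f x + t * b x))
            - ((L α - u i * α i) + u i * t) := by
      funext t
      rw [hlin t]
      congr 1
      apply intervalIntegral.integral_congr
      intro x _
      show Real.exp (E (Function.update α i t) x) = Real.exp (f x + t * b x)
      rw [hexp t x]
    rw [hfun] at hcomp
    have hlinder : HasDerivAt (fun t : ℝ => (L α - u i * α i) + u i * t) (u i) (α i) := by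
      simpa using (((hasDerivAt_id (α i)).const_mul (u i)).const_add (L α - u i * α i))
    have hfull : HasDerivAt (fun t : ℝ => (∫ x in (-1:ℝ)..1, Real.exp (f x + t * b x))
        - ((L α - u i * α i) + u i * t))
        ((∫ x in (-1:ℝ)..1, b x * Real.exp (E α x)) - u i) (α i) := by
      rw [← hval]
      exact hder.sub hlinder
    have := hcomp.hasDerivAt_eq_zero hfull
    linarith [this]
  -- apply for each coordinate
  have h0 : (∫ x in (-1:ℝ)..1, (1:ℝ) * Real.exp (E α x)) = u 0 := by
    apply hG 0 (fun _ => 1) measurable_const (fun x _ => by norm_num)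
    · intro t x; simp [hE, Function.update_apply]; try ring
    · intro t; simp [hL, Function.update_apply]; try ring
  have h1 : (∫ x in (-1:ℝ)..1, x * Real.exp (E α x)) = u 1 := by
    apply hG 1 (fun x => x) measurable_id habs
    · intro t x; simp [hE, Function.update_apply]; try ring
    · intro t; simp [hL, Function.update_apply]; try ring
  have h2 : (∫ x in (-1:ℝ)..1, (x ^ 2 * (Icc (0 : ℝ) 1).indicator 1 x) * Real.exp (E α x))
      = u 2 := by
    apply hG 2 (fun x => x ^ 2 * (Icc (0 : ℝ) 1).indicator 1 x)
      ((measurable_id.pow_const 2).mul hind1)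
      (fun x hx => hindterm _ x (habs x hx))
    · intro t x; simp [hE, Function.update_apply]; try ring
    · intro t; simp [hL, Function.update_apply]; try ring
  have h3 : (∫ x in (-1:ℝ)..1, (x ^ 2 * (Icc (-1 : ℝ) 0).indicator 1 x) * Real.exp (E α x))
      = u 3 := by
    apply hG 3 (fun x => x ^ 2 * (Icc (-1 : ℝ) 0).indicator 1 x)
      ((measurable_id.pow_const 2).mul hind2)
      (fun x hx => hindterm _ x (habs x hx))
    · intro t x; simp [hE, Function.update_apply]; try ring
    · intro t; simp [hL, Function.update_apply]; try ring
  have conv2 : (∫ x in Ioc (-1:ℝ) 1, x ^ 2 * (Icc (0:ℝ) 1).indicator 1 x * Real.exp (E α x))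
      = ∫ x in Ioc (0:ℝ) 1, x ^ 2 * Real.exp (E α x) := by
    calc (∫ x in Ioc (-1:ℝ) 1, x ^ 2 * (Icc (0:ℝ) 1).indicator 1 x * Real.exp (E α x))
        = ∫ x in Ioc (-1:ℝ) 1,
            (Ioc (0:ℝ) 1).indicator (fun x => x ^ 2 * Real.exp (E α x)) x := by
          apply MeasureTheory.setIntegral_congr_fun measurableSet_Ioc
          intro x hx
          by_cases h : 0 < x
          · have hm : x ∈ Ioc (0:ℝ) 1 := ⟨h, hx.2⟩
            have hm' : x ∈ Icc (0:ℝ) 1 := ⟨h.le, hx.2⟩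
            simp [Set.indicator_of_mem hm, Set.indicator_of_mem hm']
          · push_neg at h
            have hm : x ∉ Ioc (0:ℝ) 1 := fun hc => absurd hc.1 (not_lt.2 h)
            rw [Set.indicator_of_notMem hm]
            rcases eq_or_lt_of_le h with he | hlt
            · simp [he]
            · have hm' : x ∉ Icc (0:ℝ) 1 := fun hc => absurd hc.1 (not_le.2 hlt)
              simp [Set.indicator_of_notMem hm']
      _ = ∫ x in Ioc (-1:ℝ) 1 ∩ Ioc (0:ℝ) 1, x ^ 2 * Real.exp (E α x) :=
          MeasureTheory.setIntegral_indicator measurableSet_Ioc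
      _ = ∫ x in Ioc (0:ℝ) 1, x ^ 2 * Real.exp (E α x) := by
          rw [Set.Ioc_inter_Ioc]
          norm_num
  have conv3 : (∫ x in Ioc (-1:ℝ) 1, x ^ 2 * (Icc (-1:ℝ) 0).indicator 1 x * Real.exp (E α x))
      = ∫ x in Ioc (-1:ℝ) 0, x ^ 2 * Real.exp (E α x) := by
    calc (∫ x in Ioc (-1:ℝ) 1, x ^ 2 * (Icc (-1:ℝ) 0).indicator 1 x * Real.exp (E α x))
        = ∫ x in Ioc (-1:ℝ) 1,
            (Ioc (-1:ℝ) 0).indicator (fun x => x ^ 2 * Real.exp (E α x)) x := by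
          apply MeasureTheory.setIntegral_congr_fun measurableSet_Ioc
          intro x hx
          by_cases h : x ≤ 0
          · have hm : x ∈ Ioc (-1:ℝ) 0 := ⟨hx.1, h⟩
            have hm' : x ∈ Icc (-1:ℝ) 0 := ⟨hx.1.le, h⟩
            simp [Set.indicator_of_mem hm, Set.indicator_of_mem hm']
          · push_neg at h
            have hm : x ∉ Ioc (-1:ℝ) 0 := fun hc => absurd hc.2 (not_le.2 h)
            have hm' : x ∉ Icc (-1:ℝ) 0 := fun hc => absurd hc.2 (not_le.2 h)
            simp [Set.indicator_of_notMem hm, Set.indicator_of_notMem hm']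
      _ = ∫ x in Ioc (-1:ℝ) 1 ∩ Ioc (-1:ℝ) 0, x ^ 2 * Real.exp (E α x) :=
          MeasureTheory.setIntegral_indicator measurableSet_Ioc
      _ = ∫ x in Ioc (-1:ℝ) 0, x ^ 2 * Real.exp (E α x) := by
          rw [Set.Ioc_inter_Ioc]
          norm_num
  refine ⟨by simpa using h0, h1, ?_, ?_⟩
  · rw [intervalIntegral.integral_of_le (by norm_num : (0:ℝ) ≤ 1), ← conv2,
      ← intervalIntegral.integral_of_le (by norm_num : (-1:ℝ) ≤ 1)]
    exact h2
  · rw [intervalIntegral.integral_of_le (by norm_num : (-1:ℝ) ≤ 0), ← conv3,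
      ← intervalIntegral.integral_of_le (by norm_num : (-1:ℝ) ≤ 1)]
    exact h3
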